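/- There exists a constant $C > 0$ such that $\sum_{c > x} 3^{\omega(c)} c^{-3/2} \leq C x^{-1/2} \log^2(2 + x)$ for all real $x > 0$, where $\omega(c)$ denotes the number of distinct prime factors of $c$. -/

import Mathlib

open Filter Finset
open scoped ENNReal NNReal

lemma key_ineq (a : ℕ) (ha : 1 ≤ a) :
    ((a+1:ℕ):ℝ) ^ (-(3:ℝ)/2) ≤ 2*((a:ℝ) ^ (-(1:ℝ)/2) - ((a+1:ℕ):ℝ) ^ (-(1:ℝ)/2)) := by
  have hx : (1:ℝ) ≤ (a:ℝ) := by exact_mod_cast ha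
  push_cast
  set x : ℝ := (a:ℝ) with hxdef
  have hx0 : (0:ℝ) < x := by linarith
  have hx10 : (0:ℝ) < x + 1 := by linarith
  set s := Real.sqrt x with hs
  set t := Real.sqrt (x+1) with ht
  have hs0 : 0 < s := Real.sqrt_pos.mpr hx0
  have ht0 : 0 < t := Real.sqrt_pos.mpr hx10
  have hs2 : s^2 = x := Real.sq_sqrt hx0.le
  have ht2 : t^2 = x + 1 := Real.sq_sqrt hx10.le
  have hst : s ≤ t := Real.sqrt_le_sqrt (by linarith)
  have h1 : x ^ (-(1:ℝ)/2) = s⁻¹ := by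
    rw [hs, Real.sqrt_eq_rpow, show (-(1:ℝ))/2 = -(1/2) by norm_num, Real.rpow_neg hx0.le]
  have h2 : (x+1) ^ (-(1:ℝ)/2) = t⁻¹ := by
    rw [ht, Real.sqrt_eq_rpow, show (-(1:ℝ))/2 = -(1/2) by norm_num, Real.rpow_neg hx10.le]
  have h3 : (x+1) ^ (-(3:ℝ)/2) = (t^3)⁻¹ := by
    rw [ht, Real.sqrt_eq_rpow, show (-(3:ℝ))/2 = -(3/2) by norm_num, Real.rpow_neg hx10.le]
    congr 1
    rw [← Real.rpow_natCast ((x+1) ^ ((1:ℝ)/2)) 3, ← Real.rpow_mul hx10.le]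
    norm_num
  rw [h1, h2, h3]
  have h4 : (t - s) * (t + s) = 1 := by nlinarith
  have hts : 0 ≤ t - s := by linarith
  have hmul : s*t*(t+s) ≤ 2*t^3 := by nlinarith
  have e : 2*(s⁻¹ - t⁻¹) = (2*(t-s))/(s*t) := by field_simp
  rw [e, inv_eq_one_div, div_le_div_iff₀ (by positivity) (by positivity)]
  calc 1*(s*t) = (s*t*(t+s))*(t-s) := by linear_combination (-(s*t)) * h4
    _ ≤ (2*t^3)*(t-s) := mul_le_mul_of_nonneg_right hmul hts
    _ = 2*(t-s)*t^3 := by ring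

lemma tail_partial (N : ℕ) (hN : 1 ≤ N) (n : ℕ) :
    ∑ k ∈ range n, ((N+1+k:ℕ):ℝ) ^ (-(3:ℝ)/2) ≤ 2 * (N:ℝ) ^ (-(1:ℝ)/2) := by
  have h : ∀ k ∈ range n, ((N+1+k:ℕ):ℝ) ^ (-(3:ℝ)/2)
      ≤ 2*(((N+k:ℕ):ℝ) ^ (-(1:ℝ)/2)) - 2*(((N+(k+1):ℕ):ℝ) ^ (-(1:ℝ)/2)) := by
    intro k _
    have := key_ineq (N+k) (le_trans hN (Nat.le_add_right _ _))
    have e : N+1+k = (N+k)+1 := by omega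
    have e2 : N+(k+1) = (N+k)+1 := by omega
    rw [e, e2]
    linarith
  calc ∑ k ∈ range n, ((N+1+k:ℕ):ℝ) ^ (-(3:ℝ)/2)
      ≤ ∑ k ∈ range n, (2*(((N+k:ℕ):ℝ) ^ (-(1:ℝ)/2)) - 2*(((N+(k+1):ℕ):ℝ) ^ (-(1:ℝ)/2))) :=
        Finset.sum_le_sum h
    _ = 2*(((N+0:ℕ):ℝ) ^ (-(1:ℝ)/2)) - 2*(((N+n:ℕ):ℝ) ^ (-(1:ℝ)/2)) :=
        Finset.sum_range_sub' (fun k => 2*(((N+k:ℕ):ℝ) ^ (-(1:ℝ)/2))) n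
    _ ≤ 2 * (N:ℝ) ^ (-(1:ℝ)/2) := by
        have : (0:ℝ) ≤ ((N+n:ℕ):ℝ) ^ (-(1:ℝ)/2) := Real.rpow_nonneg (by positivity) _
        simp only [Nat.add_zero]
        linarith

lemma tail_summable (N : ℕ) : Summable (fun k : ℕ => ((N+1+k:ℕ):ℝ) ^ (-(3:ℝ)/2)) := by
  have h : Summable (fun n : ℕ => (n:ℝ) ^ (-(3:ℝ)/2)) := by
    rw [Real.summable_nat_rpow]; norm_num
  have := h.comp_injective (i := fun k : ℕ => N+1+k) (fun a b hab => by simpa using hab)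
  exact this

lemma tail_real (N : ℕ) (hN : 1 ≤ N) :
    ∑' k : ℕ, ((N+1+k:ℕ):ℝ) ^ (-(3:ℝ)/2) ≤ 2 * (N:ℝ) ^ (-(1:ℝ)/2) :=
  Summable.tsum_le_of_sum_range_le (tail_summable N) (tail_partial N hN)

lemma tail_ennreal (N : ℕ) (hN : 1 ≤ N) :
    ∑' a : ℕ, (if N < a then ((a:ℝ≥0∞)) ^ (-(3:ℝ)/2) else 0)
      ≤ ENNReal.ofReal (2 * (N:ℝ) ^ (-(1:ℝ)/2)) := by
  have hinj : Function.Injective (fun k : ℕ => N+1+k) := fun a b hab => by simpa using hab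
  have hsupp : Function.support (fun a : ℕ => if N < a then ((a:ℝ≥0∞)) ^ (-(3:ℝ)/2) else 0)
      ⊆ Set.range (fun k : ℕ => N+1+k) := by
    intro a ha
    simp only [Function.mem_support, ne_eq, ite_eq_right_iff, not_forall] at ha
    obtain ⟨h1, -⟩ := ha
    exact ⟨a - (N+1), by show N+1+(a-(N+1)) = a; omega⟩
  rw [← Function.Injective.tsum_eq hinj hsupp]
  have heq : ∀ k : ℕ, (if N < N+1+k then (((N+1+k:ℕ)):ℝ≥0∞) ^ (-(3:ℝ)/2) else 0)
      = ENNReal.ofReal (((N+1+k:ℕ):ℝ) ^ (-(3:ℝ)/2)) := by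
    intro k
    rw [if_pos (by omega)]
    rw [← ENNReal.ofReal_rpow_of_pos (by positivity), ENNReal.ofReal_natCast]
  calc ∑' k : ℕ, (if N < N+1+k then (((N+1+k:ℕ)):ℝ≥0∞) ^ (-(3:ℝ)/2) else 0)
      = ∑' k : ℕ, ENNReal.ofReal (((N+1+k:ℕ):ℝ) ^ (-(3:ℝ)/2)) := by
        exact tsum_congr heq
    _ = ENNReal.ofReal (∑' k : ℕ, ((N+1+k:ℕ):ℝ) ^ (-(3:ℝ)/2)) :=
        (ENNReal.ofReal_tsum_of_nonneg (fun k => Real.rpow_nonneg (by positivity) _) (tail_summable N)).symm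
    _ ≤ _ := ENNReal.ofReal_le_ofReal (tail_real N hN)

noncomputable def S1 (y : ℝ) : ℝ≥0∞ := ∑' c : ℕ, if y < (c:ℝ) then ((c:ℝ≥0∞)) ^ (-(3:ℝ)/2) else 0

lemma S1_bound (y : ℝ) (hy : 0 < y) :
    S1 y ≤ ENNReal.ofReal (3 * (max y 1) ^ (-(1:ℝ)/2)) := by
  set z := max y 1 with hz
  have hz1 : (1:ℝ) ≤ z := le_max_right _ _
  set N := ⌊z⌋₊ with hNdef
  have hN1 : 1 ≤ N := Nat.le_floor (by exact_mod_cast hz1)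
  have hNz : (N:ℝ) ≤ z := Nat.floor_le (by linarith)
  have hterm : ∀ c : ℕ, (if y < (c:ℝ) then ((c:ℝ≥0∞)) ^ (-(3:ℝ)/2) else 0)
      ≤ (if N < c then ((c:ℝ≥0∞)) ^ (-(3:ℝ)/2) else 0)
        + (if c = 1 ∧ y < 1 then 1 else 0) := by
    intro c
    by_cases hyc : y < (c:ℝ)
    · by_cases hNc : N < c
      · simp [hyc, hNc]
      · -- c ≤ N
        have hc1 : 1 ≤ c := by
          by_contra hc
          push_neg at hc
          interval_cases c
          · simp at hyc; linarith
        have hcz : (c:ℝ) ≤ z := le_trans (by exact_mod_cast Nat.not_lt.mp hNc) hNz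
        have hy1 : y < 1 := by
          rcases le_or_gt 1 y with h1 | h1
          · exfalso
            have : z = y := max_eq_left h1
            rw [this] at hcz
            have : (c:ℝ) ≤ (N:ℝ) := by exact_mod_cast Nat.not_lt.mp hNc
            have hfl : (N:ℝ) ≤ y := by rw [hNdef]; exact_mod_cast Nat.floor_le (by linarith) |>.trans (le_of_eq (max_eq_left h1))
            linarith
          · exact h1
        have hzc : z = 1 := max_eq_right (le_of_lt hy1)
        have : c = 1 := by
          have : (c:ℝ) ≤ 1 := by rw [hzc] at hcz; exact hcz
          have : c ≤ 1 := by exact_mod_cast this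
          omega
        subst this
        simp [hyc, hy1]
    · simp [hyc]
  calc S1 y ≤ ∑' c : ℕ, ((if N < c then ((c:ℝ≥0∞)) ^ (-(3:ℝ)/2) else 0)
        + (if c = 1 ∧ y < 1 then 1 else 0)) := ENNReal.tsum_le_tsum hterm
    _ = (∑' c : ℕ, (if N < c then ((c:ℝ≥0∞)) ^ (-(3:ℝ)/2) else 0))
        + ∑' c : ℕ, (if c = 1 ∧ y < 1 then (1:ℝ≥0∞) else 0) := ENNReal.tsum_add
    _ ≤ ENNReal.ofReal (2 * (N:ℝ) ^ (-(1:ℝ)/2)) + ∑' c : ℕ, (if c = 1 ∧ y < 1 then (1:ℝ≥0∞) else 0) := by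
        gcongr
        exact tail_ennreal N hN1
    _ ≤ ENNReal.ofReal (3 * z ^ (-(1:ℝ)/2)) := by
        rcases le_or_gt 1 y with h1 | h1
        · have he : ∀ c : ℕ, (if c = 1 ∧ y < 1 then (1:ℝ≥0∞) else 0) = 0 := by
            intro c
            simp only [ite_eq_right_iff, and_imp]
            intro _ h2
            linarith
          simp only [he, tsum_zero, add_zero]
          apply ENNReal.ofReal_le_ofReal
          have hzy : z = y := max_eq_left h1
          rw [hzy]
          -- 2 * N^{-1/2} ≤ 3 * y^{-1/2}
          have hNy2 : y/2 ≤ (N:ℝ) := by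
            rcases le_or_gt 2 y with h2 | h2
            · have : y < (N:ℝ) + 1 := by
                rw [hNdef, hzy]
                exact Nat.lt_floor_add_one y
              linarith
            · have : (1:ℝ) ≤ (N:ℝ) := by exact_mod_cast hN1
              linarith
          have hstep : (N:ℝ) ^ (-(1:ℝ)/2) ≤ (y/2) ^ (-(1:ℝ)/2) := by
            apply Real.rpow_le_rpow_of_nonpos (by linarith) hNy2 (by norm_num)
          have hdiv : (y/2) ^ (-(1:ℝ)/2) = y ^ (-(1:ℝ)/2) * 2 ^ ((1:ℝ)/2) := by
            rw [Real.div_rpow (by linarith) (by norm_num)]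
            rw [show (-(1:ℝ))/2 = -(1/2) by norm_num, Real.rpow_neg (by norm_num : (0:ℝ) ≤ 2)]
            field_simp
          have hsqrt2 : (2:ℝ) ^ ((1:ℝ)/2) ≤ 3/2 := by
            rw [← Real.sqrt_eq_rpow]
            have h := Real.sq_sqrt (by norm_num : (0:ℝ) ≤ 2)
            have hnn := Real.sqrt_nonneg 2
            nlinarith
          have hy0 : (0:ℝ) < y ^ (-(1:ℝ)/2) := Real.rpow_pos_of_pos hy _
          calc 2 * (N:ℝ) ^ (-(1:ℝ)/2) ≤ 2 * ((y/2) ^ (-(1:ℝ)/2)) := by linarith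
            _ = 2 * (2:ℝ) ^ ((1:ℝ)/2) * y ^ (-(1:ℝ)/2) := by rw [hdiv]; ring
            _ ≤ 3 * y ^ (-(1:ℝ)/2) := by nlinarith
        · have hz1' : z = 1 := max_eq_right (le_of_lt h1)
          have hNeq : N = 1 := by
            rw [hNdef, hz1']
            simp
          have he : (fun c : ℕ => (if c = 1 ∧ y < 1 then (1:ℝ≥0∞) else 0))
              = (fun c : ℕ => if c = 1 then (1:ℝ≥0∞) else 0) := by
            funext c
            simp [h1]
          rw [he, tsum_ite_eq]
          rw [hNeq, hz1']
          have : ((1:ℕ):ℝ) ^ (-(1:ℝ)/2) = 1 := by norm_num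
          rw [this]
          have : (1:ℝ) ^ (-(1:ℝ)/2) = 1 := by norm_num
          rw [this]
          rw [show (1:ℝ≥0∞) = ENNReal.ofReal 1 by simp]
          rw [← ENNReal.ofReal_add (by norm_num) (by norm_num)]
          apply ENNReal.ofReal_le_ofReal
          norm_num

lemma harmonic_real (N : ℕ) (hN : 1 ≤ N) :
    ∑ a ∈ Finset.Icc 1 N, ((a:ℝ))⁻¹ ≤ 1 + Real.log N := by
  induction N with
  | zero => omega
  | succ n ih =>
    rcases Nat.eq_or_lt_of_le hN with h1 | h1
    · simp [← h1]
    · have hn1 : 1 ≤ n := by omega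
      have hlog : ((n+1:ℕ):ℝ)⁻¹ ≤ Real.log (n+1) - Real.log n := by
        have hn0 : (0:ℝ) < n := by exact_mod_cast hn1
        have h := Real.log_le_sub_one_of_pos (x := (n:ℝ)/((n:ℝ)+1)) (by positivity)
        rw [Real.log_div (by positivity) (by positivity)] at h
        have : (n:ℝ)/((n:ℝ)+1) - 1 = -(((n:ℝ)+1))⁻¹ := by field_simp; ring
        rw [this] at h
        push_cast
        linarith
      rw [Finset.sum_Icc_succ_top (by omega)]
      have := ih hn1
      push_cast
      push_cast at hlog
      linarith

lemma harmonic_ennreal (y : ℝ) :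
    ∑' a : ℕ, (if 1 ≤ a ∧ (a:ℝ) ≤ y then ENNReal.ofReal ((a:ℝ)⁻¹) else 0)
      ≤ ENNReal.ofReal (1 + Real.log (max y 1)) := by
  set N := ⌊y⌋₊ with hNdef
  have hsum : ∑' a : ℕ, (if 1 ≤ a ∧ (a:ℝ) ≤ y then ENNReal.ofReal ((a:ℝ)⁻¹) else 0)
      = ∑ a ∈ Finset.Icc 1 N, (if 1 ≤ a ∧ (a:ℝ) ≤ y then ENNReal.ofReal ((a:ℝ)⁻¹) else 0) := by
    apply tsum_eq_sum
    intro a ha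
    simp only [Finset.mem_Icc, not_and, not_le] at ha
    simp only [ite_eq_right_iff, and_imp]
    intro h1 h2
    exfalso
    have ha1 : (1:ℝ) ≤ (a:ℝ) := by exact_mod_cast h1
    have hy0 : (0:ℝ) ≤ y := le_trans (by linarith) h2
    have : a ≤ N := Nat.le_floor h2
    omega
  rw [hsum]
  rcases Nat.eq_zero_or_pos N with hN0 | hNpos
  · rw [hN0]
    simp only [Finset.Icc_eq_empty_of_lt (by omega : (1:ℕ) > 0), Finset.sum_empty]
    · positivity
  · have hNy : (N:ℝ) ≤ y := Nat.floor_le (by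
      by_contra h
      push_neg at h
      rw [hNdef] at hNpos
      rw [Nat.floor_eq_zero.mpr] at hNpos
      · omega
      · linarith)
    have hy1 : (1:ℝ) ≤ y := le_trans (by exact_mod_cast hNpos) hNy
    have heq : ∀ a ∈ Finset.Icc 1 N, (if 1 ≤ a ∧ (a:ℝ) ≤ y then ENNReal.ofReal ((a:ℝ)⁻¹) else 0)
        = ENNReal.ofReal ((a:ℝ)⁻¹) := by
      intro a ha
      rw [Finset.mem_Icc] at ha
      rw [if_pos ⟨ha.1, le_trans (by exact_mod_cast ha.2) hNy⟩]
    rw [Finset.sum_congr rfl heq, ← ENNReal.ofReal_sum_of_nonneg (fun a _ => by positivity)]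
    apply ENNReal.ofReal_le_ofReal
    calc ∑ a ∈ Finset.Icc 1 N, ((a:ℝ))⁻¹ ≤ 1 + Real.log N := harmonic_real N hNpos
      _ ≤ 1 + Real.log (max y 1) := by
          have : (N:ℝ) ≤ max y 1 := le_trans hNy (le_max_left _ _)
          have hN0 : (0:ℝ) < N := by exact_mod_cast hNpos
          have := Real.log_le_log hN0 this
          linarith

lemma log_ge_one (z : ℝ) (hz : 1 ≤ z) : 1 ≤ Real.log (2 + z) := by
  rw [Real.le_log_iff_exp_le (by linarith)]
  have := Real.exp_one_lt_d9
  linarith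

lemma rpow_trick (a y : ℝ) (ha : 1 ≤ a) (hy : 0 < y) :
    a ^ (-(3:ℝ)/2) * ((y/a) ^ (-(1:ℝ)/2)) = y ^ (-(1:ℝ)/2) * a⁻¹ := by
  have ha0 : (0:ℝ) < a := by linarith
  rw [Real.div_rpow hy.le ha0.le]
  have e1 : a ^ (-(3:ℝ)/2) = (a ^ ((3:ℝ)/2))⁻¹ := by
    rw [← Real.rpow_neg ha0.le]; norm_num
  have e2 : a ^ (-(1:ℝ)/2) = (a ^ ((1:ℝ)/2))⁻¹ := by
    rw [← Real.rpow_neg ha0.le]; norm_num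
  have e4 : a ^ ((3:ℝ)/2) = a ^ ((1:ℝ)/2) * a := by
    have h := Real.rpow_add ha0 ((1:ℝ)/2) 1
    rw [Real.rpow_one] at h
    rw [show (3:ℝ)/2 = (1:ℝ)/2 + 1 by norm_num, h]
  rw [e1, e2, e4]
  have hb0 : (0:ℝ) < a ^ ((1:ℝ)/2) := Real.rpow_pos_of_pos ha0 _
  field_simp

lemma core (y : ℝ) (hy : 0 < y) :
    ∑' a : ℕ, (if a = 0 then 0 else
        ((a:ℝ≥0∞)) ^ (-(3:ℝ)/2) * ENNReal.ofReal ((max (y/(a:ℝ)) 1) ^ (-(1:ℝ)/2)))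
      ≤ ENNReal.ofReal (7 * (max y 1) ^ (-(1:ℝ)/2) * Real.log (2 + max y 1)) := by
  set z := max y 1 with hzdef
  have hz1 : (1:ℝ) ≤ z := le_max_right _ _
  set m := z ^ (-(1:ℝ)/2) with hmdef
  have hm0 : 0 ≤ m := Real.rpow_nonneg (by linarith) _
  have hterm : ∀ a : ℕ, (if a = 0 then 0 else
        ((a:ℝ≥0∞)) ^ (-(3:ℝ)/2) * ENNReal.ofReal ((max (y/(a:ℝ)) 1) ^ (-(1:ℝ)/2)))
      ≤ (if 1 ≤ a ∧ (a:ℝ) ≤ y then ENNReal.ofReal m * ENNReal.ofReal ((a:ℝ)⁻¹) else 0)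
        + (if y < (a:ℝ) then ((a:ℝ≥0∞)) ^ (-(3:ℝ)/2) else 0) := by
    intro a
    rcases Nat.eq_zero_or_pos a with ha0 | ha0
    · simp [ha0]
    · have ha1 : (1:ℝ) ≤ (a:ℝ) := by exact_mod_cast ha0
      have hane : a ≠ 0 := by omega
      rw [if_neg hane]
      rcases le_or_gt (a:ℝ) y with hay | hay
      · -- a ≤ y case: term equals part1
        have hy1 : (1:ℝ) ≤ y := le_trans ha1 hay
        have hzy : z = y := max_eq_left hy1
        have hya1 : (1:ℝ) ≤ y/(a:ℝ) := (one_le_div (by linarith)).mpr hay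
        have hmax : max (y/(a:ℝ)) 1 = y/(a:ℝ) := max_eq_left hya1
        have hcast : ((a:ℝ≥0∞)) ^ (-(3:ℝ)/2) = ENNReal.ofReal ((a:ℝ) ^ (-(3:ℝ)/2)) := by
          rw [← ENNReal.ofReal_natCast a, ENNReal.ofReal_rpow_of_pos (by linarith)]
        rw [hmax, hcast, ← ENNReal.ofReal_mul (by positivity)]
        rw [rpow_trick (a:ℝ) y ha1 hy]
        rw [if_pos ⟨ha0, hay⟩, if_neg (by linarith)]
        rw [add_zero, ← ENNReal.ofReal_mul hm0, hmdef, hzy]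
      · -- y < a: term ≤ part2
        rw [if_neg (by rintro ⟨-, h⟩; linarith), if_pos hay, zero_add]
        calc ((a:ℝ≥0∞)) ^ (-(3:ℝ)/2) * ENNReal.ofReal ((max (y/(a:ℝ)) 1) ^ (-(1:ℝ)/2))
            ≤ ((a:ℝ≥0∞)) ^ (-(3:ℝ)/2) * 1 :=
              mul_le_mul_right (by
                rw [ENNReal.ofReal_le_one]
                exact Real.rpow_le_one_of_one_le_of_nonpos (le_max_right _ _) (by norm_num)) _
          _ = ((a:ℝ≥0∞)) ^ (-(3:ℝ)/2) := mul_one _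
  have hL1 : 1 ≤ Real.log (2 + z) := log_ge_one z hz1
  have hLz : Real.log z ≤ Real.log (2 + z) := Real.log_le_log (by linarith) (by linarith)
  calc ∑' a : ℕ, (if a = 0 then 0 else
        ((a:ℝ≥0∞)) ^ (-(3:ℝ)/2) * ENNReal.ofReal ((max (y/(a:ℝ)) 1) ^ (-(1:ℝ)/2)))
      ≤ ∑' a : ℕ, ((if 1 ≤ a ∧ (a:ℝ) ≤ y then ENNReal.ofReal m * ENNReal.ofReal ((a:ℝ)⁻¹) else 0)
        + (if y < (a:ℝ) then ((a:ℝ≥0∞)) ^ (-(3:ℝ)/2) else 0)) := ENNReal.tsum_le_tsum hterm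
    _ = (∑' a : ℕ, (if 1 ≤ a ∧ (a:ℝ) ≤ y then ENNReal.ofReal m * ENNReal.ofReal ((a:ℝ)⁻¹) else 0))
        + ∑' a : ℕ, (if y < (a:ℝ) then ((a:ℝ≥0∞)) ^ (-(3:ℝ)/2) else 0) := ENNReal.tsum_add
    _ = ENNReal.ofReal m * (∑' a : ℕ, (if 1 ≤ a ∧ (a:ℝ) ≤ y then ENNReal.ofReal ((a:ℝ)⁻¹) else 0))
        + S1 y := by
        rw [← ENNReal.tsum_mul_left]
        congr 1
        apply tsum_congr
        intro a
        rw [mul_ite, mul_zero]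
    _ ≤ ENNReal.ofReal m * ENNReal.ofReal (1 + Real.log z)
        + ENNReal.ofReal (3 * (max y 1) ^ (-(1:ℝ)/2)) := by
        gcongr
        · exact harmonic_ennreal y
        · exact S1_bound y hy
    _ = ENNReal.ofReal (m * (1 + Real.log z) + 3 * m) := by
        have hlogz : 0 ≤ Real.log z := Real.log_nonneg hz1
        rw [← ENNReal.ofReal_mul hm0, ← ENNReal.ofReal_add (by nlinarith) (by nlinarith)]
    _ ≤ ENNReal.ofReal (7 * m * Real.log (2 + z)) := by
        apply ENNReal.ofReal_le_ofReal
        nlinarith [hm0, hL1, hLz]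

noncomputable def S2 (y : ℝ) : ℝ≥0∞ :=
  ∑' p : ℕ × ℕ, if y < ((p.1*p.2:ℕ):ℝ) then (((p.1*p.2:ℕ)):ℝ≥0∞) ^ (-(3:ℝ)/2) else 0

noncomputable def S3 (y : ℝ) : ℝ≥0∞ :=
  ∑' p : ℕ × ℕ × ℕ,
    if y < ((p.1*p.2.1*p.2.2:ℕ):ℝ) then (((p.1*p.2.1*p.2.2:ℕ)):ℝ≥0∞) ^ (-(3:ℝ)/2) else 0

lemma split_term (y : ℝ) (hy : 0 < y) (a n : ℕ) (ha : a ≠ 0) :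
    (if y < ((a*n:ℕ):ℝ) then (((a*n:ℕ)):ℝ≥0∞) ^ (-(3:ℝ)/2) else 0)
    = ((a:ℝ≥0∞)) ^ (-(3:ℝ)/2) * (if y/(a:ℝ) < (n:ℝ) then ((n:ℝ≥0∞)) ^ (-(3:ℝ)/2) else 0) := by
  have ha0 : (0:ℝ) < (a:ℝ) := by exact_mod_cast Nat.pos_of_ne_zero ha
  rcases Nat.eq_zero_or_pos n with hn0 | hn0
  · subst hn0
    rw [if_neg (by simp; positivity), if_neg (by push_cast; simp; positivity), mul_zero]
  · have hcond : (y < ((a*n:ℕ):ℝ)) ↔ (y/(a:ℝ) < (n:ℝ)) := by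
      rw [div_lt_iff₀ ha0]
      push_cast
      rw [mul_comm]
    by_cases h : y/(a:ℝ) < (n:ℝ)
    · rw [if_pos (hcond.mpr h), if_pos h]
      rw [Nat.cast_mul]
      rw [ENNReal.mul_rpow_of_ne_zero (Nat.cast_ne_zero.mpr ha) (Nat.cast_ne_zero.mpr hn0.ne')]
    · rw [if_neg (fun hh => h (hcond.mp hh)), if_neg h, mul_zero]

lemma rec2 (y : ℝ) (hy : 0 < y) :
    S2 y = ∑' a : ℕ, (if a = 0 then 0 else ((a:ℝ≥0∞)) ^ (-(3:ℝ)/2) * S1 (y/(a:ℝ))) := by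
  rw [S2]
  refine Eq.trans (ENNReal.tsum_prod
    (f := fun a b => if y < ((a*b:ℕ):ℝ) then (((a*b:ℕ)):ℝ≥0∞) ^ (-(3:ℝ)/2) else 0)) ?_
  apply tsum_congr
  intro a
  rcases Nat.eq_zero_or_pos a with ha0 | ha0
  · subst ha0
    have h0 : ∀ b : ℕ, (if y < ((0*b:ℕ):ℝ) then (((0*b:ℕ)):ℝ≥0∞) ^ (-(3:ℝ)/2) else 0) = 0 := by
      intro b
      rw [if_neg]
      push_cast
      simp
      positivity
    simp [h0]
    linarith
  · have hane : a ≠ 0 := by omega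
    rw [if_neg hane, S1, ← ENNReal.tsum_mul_left]
    apply tsum_congr
    intro b
    exact split_term y hy a b hane

lemma rec3 (y : ℝ) (hy : 0 < y) :
    S3 y = ∑' a : ℕ, (if a = 0 then 0 else ((a:ℝ≥0∞)) ^ (-(3:ℝ)/2) * S2 (y/(a:ℝ))) := by
  rw [S3]
  refine Eq.trans (ENNReal.tsum_prod
    (f := fun (a : ℕ) (q : ℕ × ℕ) => if y < ((a*q.1*q.2:ℕ):ℝ) then (((a*q.1*q.2:ℕ)):ℝ≥0∞) ^ (-(3:ℝ)/2) else 0)) ?_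
  apply tsum_congr
  intro a
  rcases Nat.eq_zero_or_pos a with ha0 | ha0
  · subst ha0
    have h0 : ∀ q : ℕ × ℕ, (if y < ((0*q.1*q.2:ℕ):ℝ) then (((0*q.1*q.2:ℕ)):ℝ≥0∞) ^ (-(3:ℝ)/2) else 0) = 0 := by
      intro q
      rw [if_neg]
      push_cast
      simp
      positivity
    simp [h0]
    linarith
  · have hane : a ≠ 0 := by omega
    rw [if_neg hane, S2, ← ENNReal.tsum_mul_left]
    apply tsum_congr
    intro q
    have : a * q.1 * q.2 = a * (q.1 * q.2) := by ring
    rw [this]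
    exact split_term y hy a (q.1*q.2) hane

lemma bnd2 (y : ℝ) (hy : 0 < y) :
    S2 y ≤ ENNReal.ofReal (21 * (max y 1) ^ (-(1:ℝ)/2) * Real.log (2 + max y 1)) := by
  rw [rec2 y hy]
  calc ∑' a : ℕ, (if a = 0 then 0 else ((a:ℝ≥0∞)) ^ (-(3:ℝ)/2) * S1 (y/(a:ℝ)))
      ≤ ∑' a : ℕ, (ENNReal.ofReal 3 * (if a = 0 then 0 else
          ((a:ℝ≥0∞)) ^ (-(3:ℝ)/2) * ENNReal.ofReal ((max (y/(a:ℝ)) 1) ^ (-(1:ℝ)/2)))) := by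
        apply ENNReal.tsum_le_tsum
        intro a
        rcases Nat.eq_zero_or_pos a with ha0 | ha0
        · simp [ha0]
        · have hane : a ≠ 0 := by omega
          have hya : 0 < y/(a:ℝ) := by
            apply div_pos hy
            exact_mod_cast ha0
          rw [if_neg hane, if_neg hane]
          calc ((a:ℝ≥0∞)) ^ (-(3:ℝ)/2) * S1 (y/(a:ℝ))
              ≤ ((a:ℝ≥0∞)) ^ (-(3:ℝ)/2) * ENNReal.ofReal (3 * (max (y/(a:ℝ)) 1) ^ (-(1:ℝ)/2)) :=
                mul_le_mul_right (S1_bound _ hya) _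
            _ = ENNReal.ofReal 3 * (((a:ℝ≥0∞)) ^ (-(3:ℝ)/2)
                * ENNReal.ofReal ((max (y/(a:ℝ)) 1) ^ (-(1:ℝ)/2))) := by
                rw [ENNReal.ofReal_mul (by norm_num)]
                ring
    _ = ENNReal.ofReal 3 * ∑' a : ℕ, (if a = 0 then 0 else
          ((a:ℝ≥0∞)) ^ (-(3:ℝ)/2) * ENNReal.ofReal ((max (y/(a:ℝ)) 1) ^ (-(1:ℝ)/2))) :=
        ENNReal.tsum_mul_left
    _ ≤ ENNReal.ofReal 3 * ENNReal.ofReal (7 * (max y 1) ^ (-(1:ℝ)/2) * Real.log (2 + max y 1)) :=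
        mul_le_mul_right (core y hy) _
    _ = ENNReal.ofReal (21 * (max y 1) ^ (-(1:ℝ)/2) * Real.log (2 + max y 1)) := by
        rw [← ENNReal.ofReal_mul (by norm_num)]
        congr 1
        ring

lemma bnd3 (y : ℝ) (hy : 0 < y) :
    S3 y ≤ ENNReal.ofReal (147 * (max y 1) ^ (-(1:ℝ)/2) * Real.log (2 + max y 1) ^ 2) := by
  have hL0 : 0 ≤ Real.log (2 + max y 1) := Real.log_nonneg (by
    have := le_max_right y 1
    linarith)
  rw [rec3 y hy]
  calc ∑' a : ℕ, (if a = 0 then 0 else ((a:ℝ≥0∞)) ^ (-(3:ℝ)/2) * S2 (y/(a:ℝ)))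
      ≤ ∑' a : ℕ, (ENNReal.ofReal (21 * Real.log (2 + max y 1)) * (if a = 0 then 0 else
          ((a:ℝ≥0∞)) ^ (-(3:ℝ)/2) * ENNReal.ofReal ((max (y/(a:ℝ)) 1) ^ (-(1:ℝ)/2)))) := by
        apply ENNReal.tsum_le_tsum
        intro a
        rcases Nat.eq_zero_or_pos a with ha0 | ha0
        · simp [ha0]
        · have hane : a ≠ 0 := by omega
          have ha1 : (1:ℝ) ≤ (a:ℝ) := by exact_mod_cast ha0
          have hya : 0 < y/(a:ℝ) := div_pos hy (by linarith)
          have hmono : Real.log (2 + max (y/(a:ℝ)) 1) ≤ Real.log (2 + max y 1) := by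
            apply Real.log_le_log (by positivity)
            have h1 : y/(a:ℝ) ≤ y := div_le_self hy.le ha1
            have : max (y/(a:ℝ)) 1 ≤ max y 1 := max_le_max h1 (le_refl 1)
            linarith
          have hm0' : 0 ≤ (max (y/(a:ℝ)) 1) ^ (-(1:ℝ)/2) := Real.rpow_nonneg (by positivity) _
          rw [if_neg hane, if_neg hane]
          calc ((a:ℝ≥0∞)) ^ (-(3:ℝ)/2) * S2 (y/(a:ℝ))
              ≤ ((a:ℝ≥0∞)) ^ (-(3:ℝ)/2) * ENNReal.ofReal
                  (21 * (max (y/(a:ℝ)) 1) ^ (-(1:ℝ)/2) * Real.log (2 + max (y/(a:ℝ)) 1)) :=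
                mul_le_mul_right (bnd2 _ hya) _
            _ ≤ ((a:ℝ≥0∞)) ^ (-(3:ℝ)/2) * ENNReal.ofReal
                  ((21 * Real.log (2 + max y 1)) * (max (y/(a:ℝ)) 1) ^ (-(1:ℝ)/2)) := by
                apply mul_le_mul_right
                apply ENNReal.ofReal_le_ofReal
                nlinarith
            _ = ENNReal.ofReal (21 * Real.log (2 + max y 1)) * (((a:ℝ≥0∞)) ^ (-(3:ℝ)/2)
                * ENNReal.ofReal ((max (y/(a:ℝ)) 1) ^ (-(1:ℝ)/2))) := by
                rw [ENNReal.ofReal_mul (by positivity)]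
                ring
    _ = ENNReal.ofReal (21 * Real.log (2 + max y 1)) * ∑' a : ℕ, (if a = 0 then 0 else
          ((a:ℝ≥0∞)) ^ (-(3:ℝ)/2) * ENNReal.ofReal ((max (y/(a:ℝ)) 1) ^ (-(1:ℝ)/2))) :=
        ENNReal.tsum_mul_left
    _ ≤ ENNReal.ofReal (21 * Real.log (2 + max y 1))
        * ENNReal.ofReal (7 * (max y 1) ^ (-(1:ℝ)/2) * Real.log (2 + max y 1)) :=
        mul_le_mul_right (core y hy) _
    _ = ENNReal.ofReal (147 * (max y 1) ^ (-(1:ℝ)/2) * Real.log (2 + max y 1) ^ 2) := by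
        rw [← ENNReal.ofReal_mul (by positivity)]
        congr 1
        ring

def g (c : ℕ) (f : {p // p ∈ c.primeFactors} → Fin 3) (i : Fin 3) : ℕ :=
  ∏ p ∈ c.primeFactors.attach, if f p = i then p.1 ^ c.factorization p.1 else 1

lemma g_prod (c : ℕ) (hc : c ≠ 0) (f : {p // p ∈ c.primeFactors} → Fin 3) :
    g c f 0 * g c f 1 * g c f 2 = c := by
  unfold g
  rw [← Finset.prod_mul_distrib, ← Finset.prod_mul_distrib]
  have hstep : ∀ p ∈ c.primeFactors.attach,
      ((if f p = 0 then p.1 ^ c.factorization p.1 else 1)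
        * (if f p = 1 then p.1 ^ c.factorization p.1 else 1)
        * (if f p = 2 then p.1 ^ c.factorization p.1 else 1)) = p.1 ^ c.factorization p.1 := by
    intro p _
    rcases hfp : f p with ⟨v, hv⟩
    interval_cases v <;> simp [hfp, Fin.ext_iff]
  rw [Finset.prod_congr rfl hstep]
  rw [Finset.prod_attach (f := fun p => p ^ c.factorization p)]
  rw [← Nat.support_factorization]
  exact Nat.factorization_prod_pow_eq_self hc

lemma g_dvd (c : ℕ) (f : {p // p ∈ c.primeFactors} → Fin 3)
    (p : {p // p ∈ c.primeFactors}) : p.1 ∣ g c f (f p) := by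
  have hv : c.factorization p.1 ≠ 0 :=
    Finsupp.mem_support_iff.mp (by rw [Nat.support_factorization]; exact p.2)
  have h1 : (if f p = f p then p.1 ^ c.factorization p.1 else 1) ∣ g c f (f p) :=
    Finset.dvd_prod_of_mem _ (Finset.mem_attach _ p)
  rw [if_pos rfl] at h1
  exact dvd_trans (dvd_pow_self _ hv) h1

lemma g_not_dvd (c : ℕ) (f : {p // p ∈ c.primeFactors} → Fin 3)
    (p : {p // p ∈ c.primeFactors}) (i : Fin 3) (hi : f p ≠ i) : ¬ (p.1 ∣ g c f i) := by
  intro hdvd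
  have hp : p.1.Prime := Nat.prime_of_mem_primeFactors p.2
  obtain ⟨q, hq, hdvd2⟩ := (Prime.dvd_finset_prod_iff hp.prime _).mp hdvd
  by_cases hfq : f q = i
  · rw [if_pos hfq] at hdvd2
    have hq' : q.1.Prime := Nat.prime_of_mem_primeFactors q.2
    have hpq : p.1 = q.1 := (Nat.prime_dvd_prime_iff_eq hp hq').mp (hp.dvd_of_dvd_pow hdvd2)
    have : p = q := Subtype.ext hpq
    subst this
    exact hi hfq
  · rw [if_neg hfq] at hdvd2
    exact hp.ne_one (Nat.dvd_one.mp hdvd2)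

lemma stepB (x : ℝ) (hx : 0 < x) :
    ∑' c : {c : ℕ // x < (c:ℝ)},
        ((3:ℝ≥0∞)) ^ (c.1.primeFactors.card) * ((c.1:ℝ≥0∞)) ^ (-(3:ℝ)/2) ≤ S3 x := by
  set T := {c : ℕ // x < (c:ℝ)} with hT
  have hc0 : ∀ c : T, c.1 ≠ 0 := by
    rintro ⟨c, hc⟩ rfl
    simp only [Nat.cast_zero] at hc
    linarith
  set Φ : (Σ c : T, ({p // p ∈ c.1.primeFactors} → Fin 3)) → ℕ × ℕ × ℕ :=
    fun σ => (g σ.1.1 σ.2 0, g σ.1.1 σ.2 1, g σ.1.1 σ.2 2) with hΦ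
  have hΦinj : Function.Injective Φ := by
    rintro ⟨⟨c, hcx⟩, f⟩ ⟨⟨d, hdx⟩, fd⟩ h
    simp only [hΦ, Prod.mk.injEq] at h
    obtain ⟨h0, h1, h2⟩ := h
    have hcd : c = d := by
      rw [← g_prod c (hc0 ⟨c, hcx⟩) f, ← g_prod d (hc0 ⟨d, hdx⟩) fd, h0, h1, h2]
    subst hcd
    have hg : ∀ i : Fin 3, g c f i = g c fd i := by
      intro i
      fin_cases i
      exacts [h0, h1, h2]
    have hf : f = fd := by
      funext p
      by_contra hne
      have hd1 : p.1 ∣ g c f (f p) := g_dvd c f p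
      rw [hg (f p)] at hd1
      exact g_not_dvd c fd p (f p) (fun hh => hne hh.symm) hd1
    subst hf
    rfl
  have inner : ∀ c : T,
      (∑' _f : ({p // p ∈ c.1.primeFactors} → Fin 3), ((c.1:ℝ≥0∞)) ^ (-(3:ℝ)/2))
      = ((3:ℝ≥0∞)) ^ (c.1.primeFactors.card) * ((c.1:ℝ≥0∞)) ^ (-(3:ℝ)/2) := by
    intro c
    rw [tsum_fintype]
    rw [Finset.sum_const, Finset.card_univ, Fintype.card_fun, Fintype.card_coe, Fintype.card_fin,
      nsmul_eq_mul]
    push_cast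
    ring
  calc ∑' c : T, ((3:ℝ≥0∞)) ^ (c.1.primeFactors.card) * ((c.1:ℝ≥0∞)) ^ (-(3:ℝ)/2)
      = ∑' (c : T) (_f : ({p // p ∈ c.1.primeFactors} → Fin 3)), ((c.1:ℝ≥0∞)) ^ (-(3:ℝ)/2) :=
        tsum_congr (fun c => (inner c).symm)
    _ = ∑' σ : (Σ c : T, ({p // p ∈ c.1.primeFactors} → Fin 3)), ((σ.1.1:ℝ≥0∞)) ^ (-(3:ℝ)/2) :=
        (ENNReal.tsum_sigma (β := fun c : T => ({p // p ∈ c.1.primeFactors} → Fin 3)) (fun (c : T) _f => ((c.1:ℝ≥0∞)) ^ (-(3:ℝ)/2))).symm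
    _ = ∑' σ : (Σ c : T, ({p // p ∈ c.1.primeFactors} → Fin 3)),
          (fun p : ℕ × ℕ × ℕ => if x < ((p.1*p.2.1*p.2.2:ℕ):ℝ)
            then (((p.1*p.2.1*p.2.2:ℕ)):ℝ≥0∞) ^ (-(3:ℝ)/2) else 0) (Φ σ) := by
        apply tsum_congr
        rintro ⟨⟨c, hcx⟩, f⟩
        simp only [hΦ]
        rw [g_prod c (hc0 ⟨c, hcx⟩) f]
        rw [if_pos hcx]
    _ ≤ ∑' p : ℕ × ℕ × ℕ, (if x < ((p.1*p.2.1*p.2.2:ℕ):ℝ)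
            then (((p.1*p.2.1*p.2.2:ℕ)):ℝ≥0∞) ^ (-(3:ℝ)/2) else 0) :=
        ENNReal.tsum_comp_le_tsum_of_injective hΦinj _
    _ = S3 x := rfl

lemma final_real (x : ℝ) (hx : 0 < x) :
    147 * (max x 1) ^ (-(1:ℝ)/2) * Real.log (2 + max x 1) ^ 2
      ≤ 1000 * x ^ (-(1:ℝ)/2) * Real.log (2 + x) ^ 2 := by
  set a := (max x 1) ^ (-(1:ℝ)/2) with hadef
  set b := x ^ (-(1:ℝ)/2) with hbdef
  set L := Real.log (2 + max x 1) with hLdef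
  set M := Real.log (2 + x) with hMdef
  have ha0 : 0 ≤ a := Real.rpow_nonneg (by positivity) _
  have hb0 : 0 < b := Real.rpow_pos_of_pos hx _
  have hM0 : 0 ≤ M := Real.log_nonneg (by linarith)
  have hL0 : 0 ≤ L := Real.log_nonneg (by
    have := le_max_right x 1
    linarith)
  have h1 : a ≤ b := by
    rcases le_or_gt 1 x with h | h
    · rw [hadef, hbdef, max_eq_left h]
    · rw [hadef, max_eq_right h.le]
      have e1 : (1:ℝ) ^ (-(1:ℝ)/2) = 1 := Real.one_rpow _
      rw [e1, hbdef]
      have h2 : x ^ ((1:ℝ)/2) ≤ 1 := Real.rpow_le_one hx.le h.le (by norm_num)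
      have h3 : 0 < x ^ ((1:ℝ)/2) := Real.rpow_pos_of_pos hx _
      have h4 : x ^ (-(1:ℝ)/2) = (x ^ ((1:ℝ)/2))⁻¹ := by
        rw [show (-(1:ℝ))/2 = -(1/2) by norm_num, Real.rpow_neg hx.le]
      rw [h4]
      exact (one_le_inv₀ h3).mpr h2
  have h2 : L ≤ 2 * M := by
    rcases le_or_gt 1 x with h | h
    · rw [hLdef, hMdef, max_eq_left h]
      have : 0 ≤ Real.log (2 + x) := Real.log_nonneg (by linarith)
      linarith
    · rw [hLdef, max_eq_right h.le]
      have e1 : Real.log 3 ≤ Real.log 4 := Real.log_le_log (by norm_num) (by norm_num)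
      have e2 : Real.log 4 = 2 * Real.log 2 := by
        rw [show (4:ℝ) = 2^2 by norm_num, Real.log_pow]
        push_cast
        ring
      have e3 : Real.log 2 ≤ M := Real.log_le_log (by norm_num) (by linarith)
      have : (2:ℝ) + 1 = 3 := by norm_num
      rw [this]
      linarith
  have hL2 : L^2 ≤ 4 * M^2 := by nlinarith
  have key : 147 * a * L^2 ≤ 588 * b * M^2 := by nlinarith [mul_le_mul_of_nonneg_left hL2 (by positivity : (0:ℝ) ≤ 147 * a), mul_le_mul_of_nonneg_right h1 (by positivity : (0:ℝ) ≤ 4 * M^2)]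
  have hbM : 0 ≤ b * M^2 := by positivity
  linarith

theorem stmt10 : ∃ C : ℝ, 0 < C ∧ ∀ x : ℝ, 0 < x →
    ∑' c : {c : ℕ // x < (c : ℝ)},
        (3 : ℝ) ^ (c.1).primeFactors.card * (c.1 : ℝ) ^ (-(3 : ℝ) / 2) ≤
      C * x ^ (-(1 : ℝ) / 2) * Real.log (2 + x) ^ 2 := by
  refine ⟨1000, by norm_num, fun x hx => ?_⟩
  set f : {c : ℕ // x < (c:ℝ)} → ℝ :=
    fun c => (3:ℝ) ^ (c.1).primeFactors.card * (c.1:ℝ) ^ (-(3:ℝ)/2) with hf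
  have hnn : ∀ c, 0 ≤ f c := by
    intro c
    apply mul_nonneg (by positivity)
    exact Real.rpow_nonneg (Nat.cast_nonneg _) _
  have hRHS0 : 0 ≤ 1000 * x ^ (-(1:ℝ)/2) * Real.log (2 + x) ^ 2 := by positivity
  by_cases hs : Summable f
  · have h1 : ENNReal.ofReal (∑' c, f c) = ∑' c, ENNReal.ofReal (f c) :=
      ENNReal.ofReal_tsum_of_nonneg hnn hs
    have h2 : ∀ c : {c : ℕ // x < (c:ℝ)}, ENNReal.ofReal (f c)
        = ((3:ℝ≥0∞)) ^ (c.1.primeFactors.card) * ((c.1:ℝ≥0∞)) ^ (-(3:ℝ)/2) := by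
      intro c
      have hcpos : (0:ℝ) < (c.1:ℝ) := lt_trans hx c.2
      rw [hf]
      rw [ENNReal.ofReal_mul (by positivity)]
      congr 1
      · rw [ENNReal.ofReal_pow (by norm_num)]
        norm_num
      · rw [← ENNReal.ofReal_rpow_of_pos hcpos, ENNReal.ofReal_natCast]
    have hchain : ENNReal.ofReal (∑' c, f c)
        ≤ ENNReal.ofReal (1000 * x ^ (-(1:ℝ)/2) * Real.log (2 + x) ^ 2) := by
      rw [h1]
      calc ∑' c, ENNReal.ofReal (f c)
          = ∑' c : {c : ℕ // x < (c:ℝ)},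
            ((3:ℝ≥0∞)) ^ (c.1.primeFactors.card) * ((c.1:ℝ≥0∞)) ^ (-(3:ℝ)/2) := tsum_congr h2
        _ ≤ S3 x := stepB x hx
        _ ≤ ENNReal.ofReal (147 * (max x 1) ^ (-(1:ℝ)/2) * Real.log (2 + max x 1) ^ 2) :=
            bnd3 x hx
        _ ≤ ENNReal.ofReal (1000 * x ^ (-(1:ℝ)/2) * Real.log (2 + x) ^ 2) :=
            ENNReal.ofReal_le_ofReal (final_real x hx)
    exact (ENNReal.ofReal_le_ofReal_iff hRHS0).mp hchain
  · rw [tsum_eq_zero_of_not_summable hs]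
    exact hRHS0
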